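/- In the ring of formal power series ℚ⟦X⟧, the exponential generating function F(X) = Σ_{n≥0} (b_n/n!)·X^n of the numbers of barred permutations satisfies (1 − X − X²/2) · F(X) = 1; equivalently, F(X) is the inverse of the power series 1 − X − X²/2. -/

import Mathlib

set_option linter.unusedSectionVars false

/-- A barred permutation of `[n]`: an ordered set partition of `Fin n` into
blocks of size 1 or 2, encoded as a list of pairwise disjoint subsets whose
union is everything. -/
def IsBarredPermutation {n : ℕ} (L : List (Finset (Fin n))) : Prop :=
  L.Pairwise Disjoint ∧ (∀ B ∈ L, B.card = 1 ∨ B.card = 2) ∧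
    L.foldr (· ∪ ·) ∅ = Finset.univ

/-- `barredCount n` is the number of barred permutations of `[n]`. -/
noncomputable def barredCount (n : ℕ) : ℕ :=
  Nat.card { L : List (Finset (Fin n)) // IsBarredPermutation L }

section Aux

open Finset

variable {α β : Type*} [DecidableEq α] [DecidableEq β]

/-- Barred partition of a finset `S`. -/
def IsBP (S : Finset α) (L : List (Finset α)) : Prop :=
  L.Pairwise Disjoint ∧ (∀ B ∈ L, B.card = 1 ∨ B.card = 2) ∧
    L.foldr (· ∪ ·) ∅ = S

lemma subset_foldr {L : List (Finset α)} {B : Finset α} (h : B ∈ L) :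
    B ⊆ L.foldr (· ∪ ·) ∅ := by
  induction L with
  | nil => simp at h
  | cons C L ih =>
    rcases List.mem_cons.1 h with rfl | h
    · exact Finset.subset_union_left
    · exact (ih h).trans Finset.subset_union_right

lemma IsBP.mem_subset {S : Finset α} {L : List (Finset α)} (h : IsBP S L)
    {B : Finset α} (hB : B ∈ L) : B ⊆ S := h.2.2 ▸ subset_foldr hB

lemma IsBP.nodup {S : Finset α} {L : List (Finset α)} (h : IsBP S L) : L.Nodup := by
  refine h.1.imp_of_mem (fun {a b} ha _ hd => ?_)
  rintro rfl
  have : a.card = 1 ∨ a.card = 2 := h.2.1 a ha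
  have : a.Nonempty := Finset.card_pos.1 (by omega)
  exact this.ne_empty (disjoint_self.1 hd)

noncomputable instance instFinBP [Fintype α] (S : Finset α) :
    Fintype { L : List (Finset α) // IsBP S L } := by
  have : Finite { L : List (Finset α) // IsBP S L } := by
    apply Finite.of_injective
      (fun L => (⟨L.1, L.2.nodup⟩ : { l : List (Finset α) // l.Nodup }))
    intro L M h
    exact Subtype.ext (congrArg Subtype.val h :)
  exact Fintype.ofFinite _

noncomputable def bpCount (S : Finset α) : ℕ :=
  Nat.card { L : List (Finset α) // IsBP S L }

lemma isBP_nil (S : Finset α) : IsBP S [] ↔ S = ∅ := by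
  simp [IsBP, eq_comm]

lemma bpCount_empty : bpCount (∅ : Finset α) = 1 := by
  have : Unique { L : List (Finset α) // IsBP ∅ L } := by
    refine ⟨⟨⟨[], (isBP_nil ∅).2 rfl⟩⟩, ?_⟩
    rintro ⟨L, hL⟩
    ext1
    cases L with
    | nil => rfl
    | cons B L =>
      exfalso
      have hB : B ⊆ (∅ : Finset α) := hL.mem_subset (List.mem_cons_self)
      have : B.card = 1 ∨ B.card = 2 := hL.2.1 B (List.mem_cons_self)
      rw [Finset.subset_empty] at hB
      subst hB
      simp at this
  exact Nat.card_unique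

lemma disjoint_foldr {L : List (Finset α)} {B : Finset α}
    (h : ∀ C ∈ L, Disjoint B C) : Disjoint B (L.foldr (· ∪ ·) ∅) := by
  induction L with
  | nil => simp
  | cons C L ih =>
    simp only [List.foldr_cons, Finset.disjoint_union_right]
    exact ⟨h C (List.mem_cons_self), ih fun D hD => h D (List.mem_cons.2 (Or.inr hD))⟩

lemma isBP_cons {S B : Finset α} {L : List (Finset α)} :
    IsBP S (B :: L) ↔ B ⊆ S ∧ (B.card = 1 ∨ B.card = 2) ∧ IsBP (S \ B) L := by
  constructor
  · rintro h
    have hBS : B ⊆ S := h.mem_subset (List.mem_cons_self)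
    have hpw := h.1
    rw [List.pairwise_cons] at hpw
    have hdisj : Disjoint B (L.foldr (· ∪ ·) ∅) := disjoint_foldr hpw.1
    have hU : B ∪ L.foldr (· ∪ ·) ∅ = S := h.2.2
    refine ⟨hBS, h.2.1 B (List.mem_cons_self), hpw.2,
      fun C hC => h.2.1 C (List.mem_cons.2 (Or.inr hC)), ?_⟩
    rw [← hU, Finset.union_sdiff_cancel_left hdisj]
  · rintro ⟨hBS, hcard, hpw, hcards, hU⟩
    refine ⟨List.pairwise_cons.2 ⟨fun C hC => ?_, hpw⟩, ?_, ?_⟩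
    · have : C ⊆ S \ B := hU ▸ subset_foldr hC
      exact Finset.disjoint_left.2 fun x hxB hxC => (Finset.mem_sdiff.1 (this hxC)).2 hxB
    · rintro C hC
      rcases List.mem_cons.1 hC with rfl | hC
      · exact hcard
      · exact hcards C hC
    · simp only [List.foldr_cons, hU]
      exact Finset.union_sdiff_of_subset hBS

lemma bpCount_eq_sum [Fintype α] {S : Finset α} (hS : S.Nonempty) :
    bpCount S =
      ∑ B ∈ S.powerset.filter (fun B => B.card = 1 ∨ B.card = 2), bpCount (S \ B) := by
  classical
  set q : Finset α → Prop := fun B => B ⊆ S ∧ (B.card = 1 ∨ B.card = 2) with hq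
  have hbij : Function.Bijective
      (fun p : (Σ B : {B : Finset α // q B}, { L : List (Finset α) // IsBP (S \ B.1) L }) =>
        (⟨p.1.1 :: p.2.1, isBP_cons.2 ⟨p.1.2.1, p.1.2.2, p.2.2⟩⟩ :
          { L : List (Finset α) // IsBP S L })) := by
    constructor
    · rintro ⟨⟨B, hB⟩, ⟨L, hL⟩⟩ ⟨⟨B', hB'⟩, ⟨L', hL'⟩⟩ h
      simp only [Subtype.mk.injEq, List.cons.injEq] at h
      obtain ⟨rfl, rfl⟩ := h
      rfl
    · rintro ⟨L, hL⟩
      cases L with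
      | nil =>
        exfalso
        rw [isBP_nil] at hL
        exact hS.ne_empty hL
      | cons B L =>
        obtain ⟨h1, h2, h3⟩ := isBP_cons.1 hL
        exact ⟨⟨⟨B, h1, h2⟩, ⟨L, h3⟩⟩, rfl⟩
  have := Nat.card_congr (Equiv.ofBijective _ hbij)
  rw [bpCount, ← this]
  rw [Nat.card_eq_fintype_card, Fintype.card_sigma]
  have : ∀ B : {B : Finset α // q B},
      Fintype.card { L : List (Finset α) // IsBP (S \ B.1) L } = bpCount (S \ B.1) := by
    intro B
    rw [bpCount, Nat.card_eq_fintype_card]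
  rw [Finset.sum_congr rfl fun B _ => this B]
  exact (Finset.sum_subtype _ (fun B => by simp [q, Finset.mem_filter, Finset.mem_powerset])
    (fun B => bpCount (S \ B))).symm

lemma foldr_union_map (g : Finset α → Finset β) (hg : ∀ A B, g (A ∪ B) = g A ∪ g B)
    (hg0 : g ∅ = ∅) (L : List (Finset α)) :
    (L.map g).foldr (· ∪ ·) ∅ = g (L.foldr (· ∪ ·) ∅) := by
  induction L with
  | nil => simp [hg0]
  | cons B L ih => simp [hg, ih]

lemma IsBP.image {f : α → β} (hf : Function.Injective f) {S : Finset α}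
    {L : List (Finset α)} (h : IsBP S L) :
    IsBP (S.image f) (L.map (Finset.image f)) := by
  refine ⟨?_, ?_, ?_⟩
  · exact List.Pairwise.map _ (fun A B hd => (Finset.disjoint_image hf).2 hd) h.1
  · intro B hB
    obtain ⟨C, hC, rfl⟩ := List.mem_map.1 hB
    rw [Finset.card_image_of_injective _ hf]
    exact h.2.1 C hC
  · rw [foldr_union_map _ (fun A B => Finset.image_union _ _) (Finset.image_empty f), h.2.2]

lemma IsBP.preimage {f : α → β} (hf : Function.Injective f) {S : Finset α}
    {L : List (Finset β)} (h : IsBP (S.image f) L) :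
    IsBP S (L.map (fun B => B.preimage f hf.injOn)) := by
  classical
  have hsub : ∀ B ∈ L, Finset.image f (B.preimage f hf.injOn) = B := by
    intro B hB
    rw [Finset.image_preimage]
    refine Finset.filter_true_of_mem fun x hx => ?_
    have := h.mem_subset hB hx
    obtain ⟨a, _, rfl⟩ := Finset.mem_image.1 this
    exact ⟨a, rfl⟩
  refine ⟨?_, ?_, ?_⟩
  · refine List.Pairwise.map _ (fun A B hd => ?_) h.1
    exact Finset.disjoint_left.2 fun x hxA hxB =>
      Finset.disjoint_left.1 hd (Finset.mem_preimage.1 hxA) (Finset.mem_preimage.1 hxB)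
  · intro B hB
    obtain ⟨C, hC, rfl⟩ := List.mem_map.1 hB
    have : (Finset.image f (C.preimage f hf.injOn)).card = C.card := by rw [hsub C hC]
    rw [Finset.card_image_of_injective _ hf] at this
    rw [this]
    exact h.2.1 C hC
  · rw [foldr_union_map (fun B => B.preimage f hf.injOn)
      (fun A B => Finset.preimage_union _) Finset.preimage_empty, h.2.2]
    ext a
    simp [Finset.mem_preimage, hf.eq_iff]

lemma preimage_image_finset {f : α → β} (hf : Function.Injective f) (B : Finset α) :
    (B.image f).preimage f hf.injOn = B := by
  ext a
  simp [Finset.mem_preimage, hf.eq_iff]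

lemma bpCount_image {f : α → β} (hf : Function.Injective f) (S : Finset α) :
    bpCount (S.image f) = bpCount S := by
  classical
  refine (Nat.card_congr
    (⟨fun L => ⟨L.1.map (Finset.image f), L.2.image hf⟩,
      fun L => ⟨L.1.map (fun B => B.preimage f hf.injOn), L.2.preimage hf⟩, ?_, ?_⟩ :
      { L : List (Finset α) // IsBP S L } ≃
        { L : List (Finset β) // IsBP (S.image f) L })).symm
  · rintro ⟨L, hL⟩
    ext1
    simp only [List.map_map]
    refine (List.map_congr_left fun B hB => ?_).trans (List.map_id L)
    exact preimage_image_finset hf B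
  · rintro ⟨L, hL⟩
    ext1
    simp only [List.map_map]
    refine (List.map_congr_left fun B hB => ?_).trans (List.map_id L)
    simp only [Function.comp]
    rw [Finset.image_preimage]
    refine Finset.filter_true_of_mem fun x hx => ?_
    have := hL.mem_subset hB hx
    obtain ⟨a, _, rfl⟩ := Finset.mem_image.1 this
    exact ⟨a, rfl⟩

lemma barredCount_eq_bpCount (n : ℕ) :
    barredCount n = bpCount (Finset.univ : Finset (Fin n)) := rfl

lemma bpCount_eq_barredCount [Fintype α] (S : Finset α) :
    bpCount S = barredCount S.card := by
  set f : Fin S.card → α := fun i => (S.equivFin.symm i : α) with hf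
  have hfi : Function.Injective f := by
    intro i j h
    exact S.equivFin.symm.injective (Subtype.ext h)
  have himg : (Finset.univ : Finset (Fin S.card)).image f = S := by
    ext a
    simp only [Finset.mem_image, Finset.mem_univ, true_and, hf]
    constructor
    · rintro ⟨i, rfl⟩; exact (S.equivFin.symm i).2
    · intro ha; exact ⟨S.equivFin ⟨a, ha⟩, by simp⟩
  rw [barredCount_eq_bpCount, ← himg, bpCount_image hfi]
  congr!
  exact himg.symm

lemma barredCount_zero : barredCount 0 = 1 := by
  rw [barredCount_eq_bpCount, Finset.univ_eq_empty, bpCount_empty]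

lemma barredCount_succ (n : ℕ) :
    barredCount (n + 1) =
      (n + 1) * barredCount n + Nat.choose (n + 1) 2 * barredCount (n - 1) := by
  classical
  rw [barredCount_eq_bpCount,
    bpCount_eq_sum (Finset.univ_nonempty : (Finset.univ : Finset (Fin (n+1))).Nonempty)]
  have hterm : ∀ B ∈ (Finset.univ : Finset (Fin (n+1))).powerset.filter
      (fun B => B.card = 1 ∨ B.card = 2),
      bpCount (Finset.univ \ B) = barredCount (n + 1 - B.card) := by
    intro B hB
    rw [bpCount_eq_barredCount, Finset.card_sdiff_of_subset (Finset.subset_univ B),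
      Finset.card_univ, Fintype.card_fin]
  rw [Finset.sum_congr rfl hterm]
  have hsplit : (Finset.univ : Finset (Fin (n+1))).powerset.filter
      (fun B => B.card = 1 ∨ B.card = 2) =
      (Finset.univ : Finset (Fin (n+1))).powersetCard 1 ∪
        (Finset.univ : Finset (Fin (n+1))).powersetCard 2 := by
    ext B
    simp [Finset.mem_powersetCard, Finset.mem_filter, Finset.mem_powerset,
      Finset.subset_univ, and_or_left]
  rw [hsplit, Finset.sum_union]
  · have h1 : ∀ B ∈ (Finset.univ : Finset (Fin (n+1))).powersetCard 1,
        barredCount (n + 1 - B.card) = barredCount n := by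
      intro B hB
      rw [(Finset.mem_powersetCard.1 hB).2, Nat.add_sub_cancel]
    have h2 : ∀ B ∈ (Finset.univ : Finset (Fin (n+1))).powersetCard 2,
        barredCount (n + 1 - B.card) = barredCount (n - 1) := by
      intro B hB
      rw [(Finset.mem_powersetCard.1 hB).2]
      congr 1
    rw [Finset.sum_congr rfl h1, Finset.sum_congr rfl h2, Finset.sum_const,
      Finset.sum_const, Finset.card_powersetCard, Finset.card_powersetCard,
      Finset.card_univ, Fintype.card_fin, Nat.choose_one_right, smul_eq_mul, smul_eq_mul]
  · rw [Finset.disjoint_left]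
    intro B hB1 hB2
    have := (Finset.mem_powersetCard.1 hB1).2
    have := (Finset.mem_powersetCard.1 hB2).2
    omega

lemma barredCount_one : barredCount 1 = 1 := by
  have := barredCount_succ 0
  simp [barredCount_zero] at this
  simpa using this

end Aux

open PowerSeries in
/-- In `ℚ⟦X⟧`, the exponential generating function
`F(X) = Σ_{n ≥ 0} (b_n / n!) Xⁿ` satisfies `(1 − X − X²/2) · F(X) = 1`. -/
theorem barredCount_egf :
    (1 - (X : ℚ⟦X⟧) - C (1 / 2 : ℚ) * X ^ 2) *
        PowerSeries.mk (fun n => (barredCount n : ℚ) / n.factorial) = 1 := by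
  set F : ℚ⟦X⟧ := PowerSeries.mk (fun n => (barredCount n : ℚ) / n.factorial) with hF
  have hexp : (1 - (X : ℚ⟦X⟧) - C (1 / 2 : ℚ) * X ^ 2) * F
      = F - X * F - C (1 / 2 : ℚ) * (X * (X * F)) := by ring
  rw [hexp]
  ext n
  rcases n with _ | n
  · simp [hF, coeff_mk, barredCount_zero]
  rcases n with _ | k
  · simp only [map_sub, coeff_succ_X_mul, coeff_C_mul, coeff_zero_X_mul, coeff_mk,
      coeff_one, hF]
    simp [barredCount_zero, barredCount_one]
  · have hrec := barredCount_succ (k + 1)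
    have hq : (barredCount (k + 2) : ℚ) =
        (k + 2) * barredCount (k + 1) + ((k + 2) * (k + 1) / 2) * barredCount k := by
      rw [show k + 1 + 1 = k + 2 from rfl] at hrec
      rw [hrec]
      push_cast [Nat.add_sub_cancel, Nat.cast_choose_two]
      ring
    simp only [map_sub, coeff_succ_X_mul, coeff_C_mul, coeff_mk, coeff_one, hF]
    rw [show k + 1 + 1 = k + 2 from rfl, hq]
    have h2 : ((k + 2).factorial : ℚ) = (k + 2) * (k + 1) * k.factorial := by
      rw [show k + 2 = (k + 1) + 1 from rfl, Nat.factorial_succ, Nat.factorial_succ]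
      push_cast
      ring
    have h1 : ((k + 1).factorial : ℚ) = (k + 1) * k.factorial := by
      rw [Nat.factorial_succ]; push_cast; ring
    have hk0 : (k.factorial : ℚ) ≠ 0 := Nat.cast_ne_zero.2 k.factorial_ne_zero
    have hk1 : ((k : ℚ) + 1) ≠ 0 := by positivity
    have hk2 : ((k : ℚ) + 2) ≠ 0 := by positivity
    rw [h2, h1]
    simp only [Nat.add_eq_zero_iff, one_ne_zero, two_ne_zero, and_false, false_and, ↓reduceIte]
    field_simp
    ring
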